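/- arXiv:2108.03943 — 2 statements merged into one kernel-verified Lean document; each statement's English description precedes it below -/
import Mathlib

section
/- Let V and W be finite sets, let G ≤ Sym(V) and H ≤ Sym(W) be transitive permutation groups, and let G × H act on V × W by (g,h)·(v,w) = (g(v), h(w)). Then the intersection density satisfies ρ(G × H) = ρ(G)·ρ(H). -/
/-! ### Basic definitions: derangement graphs, intersecting sets, EKR properties -/

/-- The derangement graph of a permutation group `G ≤ Sym(V)`: vertices are the elements
of `G`, and distinct `g`, `h` are adjacent iff `g * h⁻¹` is fixed-point-free on `V`. -/
def derGraph {V : Type*} (G : Subgroup (Equiv.Perm V)) : SimpleGraph G where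
  Adj g h := g ≠ h ∧ ∀ v : V, ((g : Equiv.Perm V) * (h : Equiv.Perm V)⁻¹) v ≠ v
  symm := by
    constructor
    rintro g h ⟨hne, hd⟩
    refine ⟨hne.symm, fun v hv => hd v ?_⟩
    have h2 := congrArg (⇑(((h : Equiv.Perm V) * (g : Equiv.Perm V)⁻¹)⁻¹)) hv
    simpa [mul_inv_rev] using h2.symm
  loopless := ⟨fun g hg => hg.1 rfl⟩

/-- A subset `I` of a permutation group `G ≤ Sym(V)` is intersecting if any two of its
elements agree on some point of `V`. -/
def IsIntersecting {V : Type*} (G : Subgroup (Equiv.Perm V)) (I : Set G) : Prop :=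
  ∀ g ∈ I, ∀ h ∈ I, ∃ v : V, (g : Equiv.Perm V) v = (h : Equiv.Perm V) v

/-- A permutation group `G ≤ Sym(V)` is transitive if it acts transitively on `V`. -/
def IsTransitive {V : Type*} (G : Subgroup (Equiv.Perm V)) : Prop :=
  ∀ v w : V, ∃ g ∈ G, g v = w

/-- A permutation group is regular if it is transitive and all point stabilizers are trivial. -/
def IsRegularGroup {V : Type*} (G : Subgroup (Equiv.Perm V)) : Prop :=
  IsTransitive G ∧ ∀ g ∈ G, ∀ v : V, g v = v → g = 1

/-- The stabilizer of a point `v`, as a subset of the permutation group `G`. -/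
def stabSet {V : Type*} (G : Subgroup (Equiv.Perm V)) (v : V) : Set G :=
  {g : G | (g : Equiv.Perm V) v = v}

/-- The intersection density `ρ(G)` of a (transitive) permutation group `G`: the maximum of
`|I| / |G_v|` over all intersecting sets `I` of `G`, where `G_v` is a point stabilizer. -/
noncomputable def interDensity {V : Type*} (G : Subgroup (Equiv.Perm V)) : ℝ :=
  sSup {x : ℝ | ∃ (I : Set G) (v : V), IsIntersecting G I ∧
    x = (Nat.card I : ℝ) / (Nat.card (stabSet G v) : ℝ)}

/-- A permutation group has the EKR-property if every intersecting set has size at most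
the size of the largest point stabilizer. -/
def HasEKR {V : Type*} (G : Subgroup (Equiv.Perm V)) : Prop :=
  ∀ I : Set G, IsIntersecting G I → Nat.card I ≤ ⨆ v : V, Nat.card (stabSet G v)

/-- A permutation group has the strict-EKR-property if every intersecting set of maximum
size is a coset of a point stabilizer. -/
def HasStrictEKR {V : Type*} (G : Subgroup (Equiv.Perm V)) : Prop :=
  ∀ I : Set G, IsIntersecting G I →
    (∀ J : Set G, IsIntersecting G J → Nat.card J ≤ Nat.card I) →
    ∃ (v : V) (a : G), I = (fun g => a * g) '' stabSet G v

/-! ### Graph products and related graph-theoretic notions -/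

/-- The strong product of two simple graphs. -/
def strongProd {α β : Type*} (X : SimpleGraph α) (Y : SimpleGraph β) :
    SimpleGraph (α × β) where
  Adj p q := (p.1 = q.1 ∧ Y.Adj p.2 q.2) ∨ (p.2 = q.2 ∧ X.Adj p.1 q.1) ∨
    (X.Adj p.1 q.1 ∧ Y.Adj p.2 q.2)
  symm := by
    constructor
    rintro p q (⟨h1, h2⟩ | ⟨h1, h2⟩ | ⟨h1, h2⟩)
    · exact Or.inl ⟨h1.symm, h2.symm⟩
    · exact Or.inr (Or.inl ⟨h1.symm, h2.symm⟩)
    · exact Or.inr (Or.inr ⟨h1.symm, h2.symm⟩)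
  loopless := by
    constructor
    rintro p (⟨_, h⟩ | ⟨_, h⟩ | ⟨h, _⟩)
    · exact Y.loopless.irrefl _ h
    · exact X.loopless.irrefl _ h
    · exact X.loopless.irrefl _ h

/-- The tensor (direct, categorical) product of two simple graphs. -/
def tensorProd {α β : Type*} (X : SimpleGraph α) (Y : SimpleGraph β) :
    SimpleGraph (α × β) where
  Adj p q := X.Adj p.1 q.1 ∧ Y.Adj p.2 q.2
  symm := ⟨fun _ _ ⟨h1, h2⟩ => ⟨h1.symm, h2.symm⟩⟩
  loopless := ⟨fun _ ⟨h1, _⟩ => X.loopless.irrefl _ h1⟩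

/-- The tensor (direct) product of a family of simple graphs: two tuples are adjacent
iff they are adjacent in every coordinate (for a nonempty index type this coincides with
the definition below, where distinctness is required to keep the graph loopless). -/
def tensorPi {ι : Type*} {α : ι → Type*} (X : ∀ i, SimpleGraph (α i)) :
    SimpleGraph (∀ i, α i) where
  Adj f g := f ≠ g ∧ ∀ i, (X i).Adj (f i) (g i)
  symm := ⟨fun _ _ ⟨hne, h⟩ => ⟨hne.symm, fun i => (h i).symm⟩⟩
  loopless := ⟨fun _ h => h.1 rfl⟩

/-- The disjoint union of `ι`-indexed copies of a simple graph `X`. -/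
def copiesGraph (ι : Type*) {α : Type*} (X : SimpleGraph α) : SimpleGraph (ι × α) where
  Adj p q := p.1 = q.1 ∧ X.Adj p.2 q.2
  symm := ⟨fun _ _ ⟨h1, h2⟩ => ⟨h1.symm, h2.symm⟩⟩
  loopless := ⟨fun _ h => X.loopless.irrefl _ h.2⟩

/-- The lexicographic product (wreath product) `X[Y]` of simple graphs. -/
def lexProd {α β : Type*} (X : SimpleGraph α) (Y : SimpleGraph β) :
    SimpleGraph (α × β) where
  Adj p q := X.Adj p.1 q.1 ∨ (p.1 = q.1 ∧ Y.Adj p.2 q.2)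
  symm := by
    constructor
    rintro p q (h | ⟨h1, h2⟩)
    · exact Or.inl h.symm
    · exact Or.inr ⟨h1.symm, h2.symm⟩
  loopless := by
    constructor
    rintro p (h | ⟨_, h⟩)
    · exact X.loopless.irrefl _ h
    · exact Y.loopless.irrefl _ h

/-- A simple graph is complete multipartite with `k` parts if its vertex set can be
partitioned into `k` (nonempty) parts so that two vertices are adjacent iff they lie in
different parts. -/
def IsCompleteMultipartiteWith {α : Type*} (X : SimpleGraph α) (k : ℕ) : Prop :=
  ∃ f : α → Fin k, Function.Surjective f ∧ ∀ a b : α, X.Adj a b ↔ f a ≠ f b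

/-- An independent set (coclique) of a simple graph. -/
def IsIndep {α : Type*} (X : SimpleGraph α) (A : Set α) : Prop :=
  ∀ a ∈ A, ∀ b ∈ A, ¬ X.Adj a b

/-- The independence number `α(X)` of a simple graph. -/
noncomputable def indepNum {α : Type*} (X : SimpleGraph α) : ℕ :=
  sSup {k : ℕ | ∃ A : Set α, IsIndep X A ∧ Nat.card A = k}

/-- The closed neighbourhood `N[A]` of a set `A` of vertices. -/
def closedNbhd {α : Type*} (X : SimpleGraph α) (A : Set α) : Set α :=
  {b | ∃ a ∈ A, a = b ∨ X.Adj a b}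

/-- A graph `X` is IS-primitive if there is no non-maximum independent set `A` with
`|A| / |N[A]| = α(X) / |V(X)|`. -/
def IsISPrimitive {α : Type*} (X : SimpleGraph α) : Prop :=
  ¬ ∃ A : Set α, IsIndep X A ∧ Nat.card A < indepNum X ∧
    (Nat.card A : ℚ) / (Nat.card (closedNbhd X A) : ℚ) =
      (indepNum X : ℚ) / (Nat.card α : ℚ)

/-- A simple graph is vertex-transitive if its automorphism group acts transitively on the
vertices. -/
def IsVertexTransitive {α : Type*} (X : SimpleGraph α) : Prop :=
  ∀ a b : α, ∃ e : X ≃g X, e a = b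

/-! ### External and internal direct products of permutation groups -/

/-- The canonical monoid homomorphism `Sym(V) × Sym(W) → Sym(V × W)`. -/
def permProdCongrHom (V W : Type*) : Equiv.Perm V × Equiv.Perm W →* Equiv.Perm (V × W) where
  toFun p := Equiv.prodCongr p.1 p.2
  map_one' := Equiv.ext fun _ => rfl
  map_mul' := fun _ _ => Equiv.ext fun _ => rfl

/-- The external direct product of permutation groups `G ≤ Sym(V)` and `H ≤ Sym(W)`,
acting on `V × W` by `(g,h)⬝(v,w) = (g v, h w)`. -/
def extProd {V W : Type*} (G : Subgroup (Equiv.Perm V)) (H : Subgroup (Equiv.Perm W)) :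
    Subgroup (Equiv.Perm (V × W)) :=
  Subgroup.map (permProdCongrHom V W) (G.prod H)

/-- The internal direct product of a family of permutation groups `G i ≤ Sym(V i)`,
acting componentwise on the disjoint union `Σ i, V i`. -/
def intProd {ι : Type*} {V : ι → Type*} (G : ∀ i, Subgroup (Equiv.Perm (V i))) :
    Subgroup (Equiv.Perm (Σ i, V i)) :=
  Subgroup.map (Equiv.Perm.sigmaCongrRightHom V) (Subgroup.pi Set.univ G)

/-! ### Wreath products of permutation groups -/

/-- The permutation of `V × {1,…,n}` associated to an element `((g₁,…,gₙ), h)` of the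
wreath product: `(a, i) ↦ (gᵢ a, h i)`. -/
def wreathPerm {V : Type*} {n : ℕ} (g : Fin n → Equiv.Perm V) (h : Equiv.Perm (Fin n)) :
    Equiv.Perm (V × Fin n) where
  toFun p := (g p.2 p.1, h p.2)
  invFun p := ((g (h⁻¹ p.2))⁻¹ p.1, h⁻¹ p.2)
  left_inv := by rintro ⟨a, i⟩; simp
  right_inv := by rintro ⟨b, j⟩; simp

/-- The wreath product `G ≀ H` of `G ≤ Sym(V)` by `H ≤ Sₙ`, as a permutation group
acting on `V × {1,…,n}`. -/
def wreathProd {V : Type*} {n : ℕ} (G : Subgroup (Equiv.Perm V))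
    (H : Subgroup (Equiv.Perm (Fin n))) : Subgroup (Equiv.Perm (V × Fin n)) where
  carrier := {σ | ∃ (g : Fin n → Equiv.Perm V) (h : Equiv.Perm (Fin n)),
    (∀ i, g i ∈ G) ∧ h ∈ H ∧ σ = wreathPerm g h}
  one_mem' := ⟨fun _ => 1, 1, fun _ => G.one_mem, H.one_mem, Equiv.ext fun _ => rfl⟩
  mul_mem' := by
    rintro σ τ ⟨g, h, hg, hh, rfl⟩ ⟨g', h', hg', hh', rfl⟩
    exact ⟨fun i => g (h' i) * g' i, h * h',
      fun i => G.mul_mem (hg _) (hg' _), H.mul_mem hh hh', Equiv.ext fun _ => rfl⟩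
  inv_mem' := by
    rintro σ ⟨g, h, hg, hh, rfl⟩
    exact ⟨fun i => (g (h⁻¹ i))⁻¹, h⁻¹,
      fun i => G.inv_mem (hg _), H.inv_mem hh, Equiv.ext fun _ => rfl⟩

theorem mem_wreathProd {V : Type*} {n : ℕ} {G : Subgroup (Equiv.Perm V)}
    {H : Subgroup (Equiv.Perm (Fin n))} {σ : Equiv.Perm (V × Fin n)} :
    σ ∈ wreathProd G H ↔ ∃ (g : Fin n → Equiv.Perm V) (h : Equiv.Perm (Fin n)),
      (∀ i, g i ∈ G) ∧ h ∈ H ∧ σ = wreathPerm g h := Iff.rfl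
section InterDensityProd

/-- The set whose supremum defines the intersection density. -/
def densSet {V : Type*} (G : Subgroup (Equiv.Perm V)) : Set ℝ :=
  {x : ℝ | ∃ (I : Set G) (v : V), IsIntersecting G I ∧
    x = (Nat.card I : ℝ) / (Nat.card (stabSet G v) : ℝ)}

lemma interDensity_eq {V : Type*} (G : Subgroup (Equiv.Perm V)) :
    interDensity G = sSup (densSet G) := rfl

lemma densSet_finite {V : Type*} [Finite V] (G : Subgroup (Equiv.Perm V)) :
    (densSet G).Finite := by
  apply Set.Finite.subset (Set.finite_range
    (fun p : Set G × V => (Nat.card p.1 : ℝ) / (Nat.card (stabSet G p.2) : ℝ)))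
  rintro x ⟨I, v, -, rfl⟩
  exact ⟨(I, v), rfl⟩

lemma densSet_nonempty {V : Type*} [Nonempty V] (G : Subgroup (Equiv.Perm V)) :
    (densSet G).Nonempty := by
  refine ⟨0, ∅, Classical.arbitrary V, fun g hg => hg.elim, ?_⟩
  simp

lemma densSet_nonneg {V : Type*} (G : Subgroup (Equiv.Perm V)) {x : ℝ} (hx : x ∈ densSet G) :
    0 ≤ x := by
  obtain ⟨I, v, -, rfl⟩ := hx
  positivity

lemma stabSet_card_pos {V : Type*} [Finite V] (G : Subgroup (Equiv.Perm V)) (v : V) :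
    0 < Nat.card (stabSet G v) :=
  @Nat.card_pos _ ⟨⟨1, show ((1 : G) : Equiv.Perm V) v = v by simp⟩⟩ _

variable {V W : Type*} [Nonempty V] [Nonempty W]
variable (G : Subgroup (Equiv.Perm V)) (H : Subgroup (Equiv.Perm W))

/-- The canonical element of `extProd G H` built from `g ∈ G` and `h ∈ H`. -/
def extPair (g : G) (h : H) : (extProd G H) :=
  ⟨permProdCongrHom V W ((g : Equiv.Perm V), (h : Equiv.Perm W)),
    Subgroup.mem_map.2 ⟨((g : Equiv.Perm V), (h : Equiv.Perm W)),
      Subgroup.mem_prod.2 ⟨g.2, h.2⟩, rfl⟩⟩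

lemma extPair_apply (g : G) (h : H) (v : V) (w : W) :
    ((extPair G H g h : Equiv.Perm (V × W))) (v, w)
      = ((g : Equiv.Perm V) v, (h : Equiv.Perm W) w) := rfl

lemma extPair_injective :
    Function.Injective (fun p : G × H => extPair G H p.1 p.2) := by
  rintro ⟨g, h⟩ ⟨g', h'⟩ hp
  have key : ∀ v w, ((g : Equiv.Perm V) v, (h : Equiv.Perm W) w)
      = ((g' : Equiv.Perm V) v, (h' : Equiv.Perm W) w) := by
    intro v w
    have h2 := congrArg (fun σ : (extProd G H) => (σ : Equiv.Perm (V × W)) (v, w)) hp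
    simpa [extPair_apply] using h2
  obtain ⟨v0⟩ := ‹Nonempty V›
  obtain ⟨w0⟩ := ‹Nonempty W›
  have hg : g = g' := Subtype.ext (Equiv.ext fun v => congrArg Prod.fst (key v w0))
  have hh : h = h' := Subtype.ext (Equiv.ext fun w => congrArg Prod.snd (key v0 w))
  simp [hg, hh]

lemma extPair_surjective (σ : (extProd G H)) : ∃ (g : G) (h : H), extPair G H g h = σ := by
  obtain ⟨τ, hτ⟩ := σ
  obtain ⟨p, hp, rfl⟩ := Subgroup.mem_map.1 hτ
  obtain ⟨h1, h2⟩ := Subgroup.mem_prod.1 hp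
  exact ⟨⟨p.1, h1⟩, ⟨p.2, h2⟩, rfl⟩

lemma stab_card_extProd (v : V) (w : W) :
    Nat.card (stabSet (extProd G H) (v, w))
      = Nat.card (stabSet G v) * Nat.card (stabSet H w) := by
  rw [← Nat.card_prod]
  have hmem : ∀ (p : ↥(stabSet G v) × ↥(stabSet H w)),
      extPair G H p.1.1 p.2.1 ∈ stabSet (extProd G H) (v, w) := by
    rintro ⟨⟨g, hg⟩, ⟨h, hh⟩⟩
    show ((extPair G H g h : Equiv.Perm (V × W))) (v, w) = (v, w)
    rw [extPair_apply]
    simp only [stabSet, Set.mem_setOf_eq] at hg hh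
    rw [hg, hh]
  refine (Nat.card_congr (Equiv.ofBijective
    (fun p => ⟨extPair G H p.1.1 p.2.1, hmem p⟩) ⟨?_, ?_⟩)).symm
  · rintro ⟨⟨g, hg⟩, ⟨h, hh⟩⟩ ⟨⟨g', hg'⟩, ⟨h', hh'⟩⟩ hpq
    have h2 : ((g, h) : G × H) = (g', h') :=
      extPair_injective G H (congrArg Subtype.val hpq)
    simp only [Prod.mk.injEq] at h2
    exact Prod.ext (Subtype.ext h2.1) (Subtype.ext h2.2)
  · rintro ⟨σ, hσ⟩
    obtain ⟨g, h, rfl⟩ := extPair_surjective G H σ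
    have h3 : ((extPair G H g h : Equiv.Perm (V × W))) (v, w) = (v, w) := hσ
    rw [extPair_apply] at h3
    exact ⟨⟨⟨g, congrArg Prod.fst h3⟩, ⟨h, congrArg Prod.snd h3⟩⟩, rfl⟩

end InterDensityProd

/-- For transitive permutation groups `G ≤ Sym(V)` and `H ≤ Sym(W)`
on finite sets, the intersection density of the external direct product satisfies
`ρ(G × H) = ρ(G) * ρ(H)`. -/
theorem interDensity_extProd {V W : Type*} [Fintype V] [Fintype W] [Nonempty V] [Nonempty W]
    (G : Subgroup (Equiv.Perm V)) (H : Subgroup (Equiv.Perm W))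
    (hG : IsTransitive G) (hH : IsTransitive H) :
    interDensity (extProd G H) = interDensity G * interDensity H := by
  classical
  rw [interDensity_eq, interDensity_eq, interDensity_eq]
  have hfinG := densSet_finite G
  have hfinH := densSet_finite H
  have hfinP := densSet_finite (extProd G H)
  have hneG := densSet_nonempty G
  have hneH := densSet_nonempty H
  have hneP := densSet_nonempty (extProd G H)
  have hGmem := hneG.csSup_mem hfinG
  have hHmem := hneH.csSup_mem hfinH
  set ρG := sSup (densSet G) with hrG
  set ρH := sSup (densSet H) with hrH
  have hρG0 : 0 ≤ ρG := densSet_nonneg G hGmem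
  have hρH0 : 0 ≤ ρH := densSet_nonneg H hHmem
  apply le_antisymm
  · apply csSup_le hneP
    rintro x ⟨I, ⟨v, w⟩, hI, rfl⟩
    have hAint : IsIntersecting G {g : G | ∃ h : H, extPair G H g h ∈ I} := by
      rintro g ⟨h, hgh⟩ g' ⟨h', hgh'⟩
      obtain ⟨⟨v', w'⟩, hv⟩ := hI _ hgh _ hgh'
      rw [extPair_apply, extPair_apply] at hv
      exact ⟨v', congrArg Prod.fst hv⟩
    have hBint : IsIntersecting H {h : H | ∃ g : G, extPair G H g h ∈ I} := by
      rintro h ⟨g, hgh⟩ h' ⟨g', hgh'⟩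
      obtain ⟨⟨v', w'⟩, hv⟩ := hI _ hgh _ hgh'
      rw [extPair_apply, extPair_apply] at hv
      exact ⟨w', congrArg Prod.snd hv⟩
    have hsub : I ⊆ (fun p : G × H => extPair G H p.1 p.2) ''
        ({g : G | ∃ h : H, extPair G H g h ∈ I} ×ˢ {h : H | ∃ g : G, extPair G H g h ∈ I}) := by
      intro σ hσ
      obtain ⟨g, h, rfl⟩ := extPair_surjective G H σ
      exact ⟨(g, h), ⟨⟨h, hσ⟩, ⟨g, hσ⟩⟩, rfl⟩
    have hcard : (Nat.card I : ℝ) ≤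
        (Nat.card {g : G | ∃ h : H, extPair G H g h ∈ I} : ℝ) *
        (Nat.card {h : H | ∃ g : G, extPair G H g h ∈ I} : ℝ) := by
      have h1 : Nat.card I ≤ Nat.card ((fun p : G × H => extPair G H p.1 p.2) ''
          ({g : G | ∃ h : H, extPair G H g h ∈ I} ×ˢ {h : H | ∃ g : G, extPair G H g h ∈ I})) := by
        rw [Nat.card_coe_set_eq, Nat.card_coe_set_eq]
        exact Set.ncard_le_ncard hsub (Set.toFinite _)
      rw [Nat.card_image_of_injective (extPair_injective G H),
        Nat.card_congr (Equiv.Set.prod _ _), Nat.card_prod] at h1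
      exact_mod_cast h1
    have hav : (0 : ℝ) < (Nat.card (stabSet G v) : ℝ) := by
      exact_mod_cast stabSet_card_pos G v
    have hbw : (0 : ℝ) < (Nat.card (stabSet H w) : ℝ) := by
      exact_mod_cast stabSet_card_pos H w
    have hAle : (Nat.card {g : G | ∃ h : H, extPair G H g h ∈ I} : ℝ) ≤
        ρG * (Nat.card (stabSet G v) : ℝ) := by
      have hm : (Nat.card {g : G | ∃ h : H, extPair G H g h ∈ I} : ℝ) /
          (Nat.card (stabSet G v) : ℝ) ∈ densSet G := ⟨_, v, hAint, rfl⟩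
      have h4 := le_csSup hfinG.bddAbove hm
      rwa [div_le_iff₀ hav] at h4
    have hBle : (Nat.card {h : H | ∃ g : G, extPair G H g h ∈ I} : ℝ) ≤
        ρH * (Nat.card (stabSet H w) : ℝ) := by
      have hm : (Nat.card {h : H | ∃ g : G, extPair G H g h ∈ I} : ℝ) /
          (Nat.card (stabSet H w) : ℝ) ∈ densSet H := ⟨_, w, hBint, rfl⟩
      have h4 := le_csSup hfinH.bddAbove hm
      rwa [div_le_iff₀ hbw] at h4
    rw [stab_card_extProd, div_le_iff₀ (by exact_mod_cast Nat.mul_pos (stabSet_card_pos G v) (stabSet_card_pos H w) : (0:ℝ) <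
      ((Nat.card (stabSet G v) * Nat.card (stabSet H w) : ℕ) : ℝ))]
    push_cast
    nlinarith [mul_le_mul hAle hBle (by positivity :
        (0:ℝ) ≤ (Nat.card {h : H | ∃ g : G, extPair G H g h ∈ I} : ℝ))
      (by positivity : (0:ℝ) ≤ ρG * (Nat.card (stabSet G v) : ℝ))]
  · obtain ⟨IG, v, hIG, hρGeq⟩ := hGmem
    obtain ⟨IH, w, hIH, hρHeq⟩ := hHmem
    have hK : IsIntersecting (extProd G H)
        ((fun p : G × H => extPair G H p.1 p.2) '' (IG ×ˢ IH)) := by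
      rintro σ ⟨⟨g, h⟩, ⟨hg, hh⟩, rfl⟩ τ ⟨⟨g', h'⟩, ⟨hg', hh'⟩, rfl⟩
      obtain ⟨v', hv'⟩ := hIG g hg g' hg'
      obtain ⟨w', hw'⟩ := hIH h hh h' hh'
      exact ⟨(v', w'), by rw [extPair_apply, extPair_apply, hv', hw']⟩
    have hmem : ρG * ρH ∈ densSet (extProd G H) := by
      refine ⟨_, (v, w), hK, ?_⟩
      rw [Nat.card_image_of_injective (extPair_injective G H),
        Nat.card_congr (Equiv.Set.prod _ _), Nat.card_prod, stab_card_extProd,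
        hρGeq, hρHeq]
      push_cast
      rw [div_mul_div_comm]
    exact le_csSup hfinP.bddAbove hmem
end

section
/- Let n ≥ 3 and let H ≤ Sₙ be a transitive permutation group having the strict-EKR-property that contains an element fixing exactly one point of {1,…,n}. Then the wreath product S₃ ≀ H, acting on {1,2,3} × {1,…,n} by ((g₁,…,gₙ),h)·(a,i) = (g_i(a), h(i)), has the strict-EKR-property. -/
namespace S3EKR

abbrev P3 := Equiv.Perm (Fin 3)

def cc : P3 := Equiv.swap 0 1 * Equiv.swap 1 2
def twist : P3 := Equiv.swap 0 1

/-- parity indicator -/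
def ev (x : P3) : Bool := x = 1 || x = cc || x = cc * cc

/-- canonical `A₃`-part -/
def kap (x : P3) : P3 :=
  if x = 1 ∨ x = twist then 1 else if x = cc ∨ x = cc * twist then cc else cc * cc

lemma D1 : ∀ x y : P3, (∃ p, x p = y p) ↔ (x = y ∨ ev x ≠ ev y) := by decide
lemma D3 : ∀ x : P3, (kap x)⁻¹ * x = 1 ∨ (kap x)⁻¹ * x = twist := by decide
lemma D5 : ∀ x y : P3, kap x * (kap y)⁻¹ = 1 ∨ kap x * (kap y)⁻¹ = cc ∨
    kap x * (kap y)⁻¹ = cc * cc := by decide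
lemma D6 : ∀ d z : P3, (d = 1 ∨ d = cc ∨ d = cc * cc) → ev (d * z) = ev z := by decide
lemma D7 : ev twist = false ∧ ev (1 : P3) = true ∧ twist ≠ 1 := by decide
lemma D9 : ∀ x : P3, kap x = 1 ∨ kap x = cc ∨ kap x = cc * cc := by decide
lemma D10 : ∀ u : P3, ev u = false → ∀ b, u b = b →
    ∀ z : P3, (z b = b ↔ (z = 1 ∨ z = u)) := by decide
lemma D11 : ∀ u : P3, ev u = false → ∃ b, u b = b := by decide
lemma D14 : ∀ p : Fin 3, Nat.card {z : P3 // z p = p} = 2 := by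
  simp only [Nat.card_eq_fintype_card]; decide

end S3EKR
namespace S3EKR

section Wreath
variable {n : ℕ} {H : Subgroup (Equiv.Perm (Fin n))}

@[simp] lemma wreathPerm_apply (g : Fin n → P3) (h : Equiv.Perm (Fin n)) (a : Fin 3)
    (i : Fin n) : wreathPerm g h (a, i) = (g i a, h i) := rfl

lemma wreathPerm_inj {g g' : Fin n → P3} {h h' : Equiv.Perm (Fin n)}
    (e : wreathPerm g h = wreathPerm g' h') : g = g' ∧ h = h' := by
  refine ⟨funext fun i => Equiv.ext fun a => ?_, Equiv.ext fun i => ?_⟩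
  · have := congrArg (fun σ : Equiv.Perm (Fin 3 × Fin n) => (σ (a, i)).1) e
    simpa using this
  · have := congrArg (fun σ : Equiv.Perm (Fin 3 × Fin n) => (σ (0, i)).2) e
    simpa using this

lemma wreathPerm_mul (g g' : Fin n → P3) (h h' : Equiv.Perm (Fin n)) :
    wreathPerm g h * wreathPerm g' h' = wreathPerm (fun i => g (h' i) * g' i) (h * h') := by
  ext p <;> rfl

/-- the parametrization of the wreath product -/
noncomputable def Psi (H : Subgroup (Equiv.Perm (Fin n))) :
    ((Fin n → P3) × H) ≃ (wreathProd (⊤ : Subgroup P3) H) :=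
  Equiv.ofBijective
    (fun p => ⟨wreathPerm p.1 (p.2 : Equiv.Perm (Fin n)),
      ⟨p.1, p.2, fun _ => trivial, p.2.2, rfl⟩⟩)
    (by
      constructor
      · rintro ⟨g, h⟩ ⟨g', h'⟩ e
        have e' : wreathPerm g (h : Equiv.Perm (Fin n)) = wreathPerm g' (h' : _) :=
          congrArg Subtype.val e
        obtain ⟨e1, e2⟩ := wreathPerm_inj e'
        simp [Prod.ext_iff, e1, Subtype.ext e2]
      · rintro ⟨σ, g, h, -, hh, rfl⟩
        exact ⟨(g, ⟨h, hh⟩), rfl⟩)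

@[simp] lemma Psi_coe (p : (Fin n → P3) × H) :
    ((Psi H p : wreathProd (⊤ : Subgroup P3) H) : Equiv.Perm (Fin 3 × Fin n)) =
      wreathPerm p.1 (p.2 : Equiv.Perm (Fin n)) := rfl

end Wreath
end S3EKR
namespace S3EKR
open scoped Classical

lemma card_P3 : Nat.card P3 = 6 := by simp [Nat.card_eq_fintype_card]; decide

section Counting
variable {n : ℕ}

/-- splitting a function space at one coordinate, with a constraint there -/
def coordEquiv (i : Fin n) (s : Set P3) :
    {g : Fin n → P3 // g i ∈ s} ≃ ↥s × ({k : Fin n // k ≠ i} → P3) where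
  toFun g := (⟨g.1 i, g.2⟩, fun k => g.1 k.1)
  invFun p := ⟨fun k => if h : k = i then p.1.1 else p.2 ⟨k, h⟩, by simp⟩
  left_inv g := by
    apply Subtype.ext; funext k
    by_cases h : k = i
    · subst h; simp
    · simp [h]
  right_inv p := by
    refine Prod.ext (Subtype.ext (by simp)) (funext fun k => ?_)
    simp [k.2]

lemma card_coord (i : Fin n) (s : Set P3) :
    Nat.card {g : Fin n → P3 | g i ∈ s} = Nat.card s * 6 ^ (n - 1) := by
  have e : Nat.card {g : Fin n → P3 | g i ∈ s} =
      Nat.card (↥s × ({k : Fin n // k ≠ i} → P3)) := Nat.card_congr (coordEquiv i s)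
  rw [e, Nat.card_prod]
  congr 1
  rw [Nat.card_eq_fintype_card, Fintype.card_fun]
  have h1 : Fintype.card {k : Fin n // k ≠ i} = n - 1 := by
    have := Fintype.card_subtype_compl (fun k : Fin n => k = i)
    simpa using this
  have h2 : Fintype.card P3 = 6 := by decide
  rw [h1, h2]

lemma card_setProd {α β : Type*} (s : Set α) (t : Set β) :
    Nat.card ↥(s ×ˢ t) = Nat.card s * Nat.card t := by
  rw [Nat.card_congr (Equiv.Set.prod s t), Nat.card_prod]

variable {H : Subgroup (Equiv.Perm (Fin n))}

lemma stab_card (hH : IsTransitive H) (i : Fin n) :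
    n * Nat.card (stabSet H i) = Nat.card H := by
  have e := MulAction.orbitProdStabilizerEquivGroup H i
  have horb : MulAction.orbit H i = Set.univ := by
    refine Set.eq_univ_of_forall fun w => ?_
    obtain ⟨g, hg, hgw⟩ := hH i w
    exact ⟨⟨g, hg⟩, by simp [Subgroup.smul_def, Equiv.Perm.smul_def, hgw]⟩
  have hstab : stabSet H i = ((MulAction.stabilizer H i : Subgroup H) : Set H) := by
    ext h
    simp [stabSet, MulAction.mem_stabilizer_iff, Subgroup.smul_def, Equiv.Perm.smul_def]
  have := Nat.card_congr e
  rw [Nat.card_prod] at this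
  rw [hstab]
  rw [horb] at this
  have hu : Nat.card (Set.univ : Set (Fin n)) = n := by
    rw [Nat.card_congr (Equiv.Set.univ (Fin n)), Nat.card_eq_fintype_card, Fintype.card_fin]
  rw [hu] at this
  exact this

end Counting
end S3EKR
namespace S3EKR

section MaxH
variable {n : ℕ} {H : Subgroup (Equiv.Perm (Fin n))}

lemma stabSet_intersecting (i : Fin n) : IsIntersecting H (stabSet H i) :=
  fun g hg h hh => ⟨i, by rw [hg, hh]⟩

lemma stab_card_eq (hH : IsTransitive H) (i j : Fin n) :
    Nat.card (stabSet H i) = Nat.card (stabSet H j) := by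
  have h1 := stab_card hH i
  have h2 := stab_card hH j
  exact Nat.eq_of_mul_eq_mul_left i.pos (h1.trans h2.symm)

lemma H_max_bound (hH : IsTransitive H) (hstrict : HasStrictEKR H) (i₀ : Fin n)
    (J : Set H) (hJ : IsIntersecting H J) : Nat.card J ≤ Nat.card (stabSet H i₀) := by
  set K : Set ℕ := {k | ∃ J : Set H, IsIntersecting H J ∧ Nat.card J = k} with hK
  have hne : K.Nonempty := ⟨_, stabSet H i₀, stabSet_intersecting i₀, rfl⟩
  have hbdd : BddAbove K := by
    refine ⟨Nat.card H, ?_⟩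
    rintro k ⟨J', -, rfl⟩
    exact Nat.card_le_card_of_injective Subtype.val Subtype.val_injective
  obtain ⟨J', hJ'int, hJ'card⟩ := Nat.sSup_mem hne hbdd
  have hmax : ∀ J'' : Set H, IsIntersecting H J'' → Nat.card J'' ≤ Nat.card J' := by
    intro J'' h
    rw [hJ'card]
    exact le_csSup hbdd ⟨J'', h, rfl⟩
  obtain ⟨v, a, hv⟩ := hstrict J' hJ'int hmax
  have hco : Nat.card J' = Nat.card (stabSet H v) := by
    rw [hv]
    exact Nat.card_image_of_injective (mul_right_injective a) _
  calc Nat.card J ≤ Nat.card J' := hmax J hJ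
    _ = Nat.card (stabSet H i₀) := by rw [hco, stab_card_eq hH]

end MaxH
end S3EKR
namespace S3EKR

section Fiber
variable {n : ℕ}

/-- canonical representative of the diagonal `A₃`-orbit of a tuple -/
def repT (i0 : Fin n) (g : Fin n → P3) : Fin n → P3 := fun i => (kap (g i0))⁻¹ * g i

def RSet (i0 : Fin n) : Set (Fin n → P3) := {u | u i0 ∈ ({1, twist} : Set P3)}

lemma repT_mem (i0 : Fin n) (g : Fin n → P3) : repT i0 g ∈ RSet i0 := by
  rcases D3 (g i0) with h | h
  · exact Or.inl h
  · exact Or.inr h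

lemma repT_inj (i0 : Fin n) {g g' : Fin n → P3}
    (hint : ∃ i, g i = g' i ∨ ev (g i) ≠ ev (g' i))
    (he : repT i0 g = repT i0 g') : g = g' := by
  set d : P3 := kap (g' i0) * (kap (g i0))⁻¹ with hd
  have hdg : ∀ i, g' i = d * g i := by
    intro i
    have hthis := congrFun he i
    simp only [repT] at hthis
    calc g' i = kap (g' i0) * ((kap (g' i0))⁻¹ * g' i) := by group
      _ = kap (g' i0) * ((kap (g i0))⁻¹ * g i) := by rw [hthis]
      _ = d * g i := by rw [hd]; group
  have hdA : d = 1 ∨ d = cc ∨ d = cc * cc := D5 _ _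
  have hd1 : d = 1 := by
    obtain ⟨i, hi⟩ := hint
    rcases hi with hi | hi
    · have h2 : d * g i = 1 * g i := by rw [← hdg i, ← hi, one_mul]
      exact mul_right_cancel h2
    · exact absurd (by rw [hdg i, D6 d (g i) hdA]) hi
  funext i
  rw [hdg i, hd1, one_mul]

/-- the value of a tuple from its representative tuple -/
lemma repT_eq_iff (i0 : Fin n) (g : Fin n → P3) (u : Fin n → P3) (h : repT i0 g = u) :
    ∀ i, g i = kap (g i0) * u i := by
  intro i
  have := congrFun h i
  simp only [repT] at this
  rw [← this]; group

lemma fiber_card_le (i0 : Fin n) (A : Set (Fin n → P3))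
    (hA : ∀ g ∈ A, ∀ g' ∈ A, ∃ i, g i = g' i ∨ ev (g i) ≠ ev (g' i)) :
    Nat.card A ≤ Nat.card (RSet i0) := by
  refine Nat.card_le_card_of_injective
    (fun g => ⟨repT i0 g.1, repT_mem i0 g.1⟩ : A → RSet i0) ?_
  rintro ⟨g, hg⟩ ⟨g', hg'⟩ he
  exact Subtype.ext (repT_inj i0 (hA g hg g' hg') (congrArg Subtype.val he))

lemma fiber_parity (i0 : Fin n) (A : Set (Fin n → P3))
    (hA : ∀ g ∈ A, ∀ g' ∈ A, ∃ i, g i = g' i ∨ ev (g i) ≠ ev (g' i))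
    (hcard : Nat.card (RSet i0) ≤ Nat.card A) (j : Fin n) (b : Bool) :
    ∃ g ∈ A, ev (g j) = b := by
  have hinj : Function.Injective
      (fun g => ⟨repT i0 g.1, repT_mem i0 g.1⟩ : A → RSet i0) := by
    rintro ⟨g, hg⟩ ⟨g', hg'⟩ he
    exact Subtype.ext (repT_inj i0 (hA g hg g' hg') (congrArg Subtype.val he))
  have hsurj : Function.Surjective
      (fun g => ⟨repT i0 g.1, repT_mem i0 g.1⟩ : A → RSet i0) := by
    have := (Nat.bijective_iff_injective_and_card
      (fun g => ⟨repT i0 g.1, repT_mem i0 g.1⟩ : A → RSet i0)).2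
      ⟨hinj, le_antisymm (Nat.card_le_card_of_injective _ hinj) hcard⟩
    exact this.2
  -- target representative
  set u : Fin n → P3 := fun i => if i = j then (if b then 1 else twist) else 1 with hu
  have humem : u ∈ RSet i0 := by
    simp only [RSet, hu, Set.mem_setOf_eq]
    by_cases h : i0 = j <;> by_cases hb : b <;> simp [h, hb]
  obtain ⟨⟨g, hg⟩, hrep⟩ := hsurj ⟨u, humem⟩
  refine ⟨g, hg, ?_⟩
  have hval := repT_eq_iff i0 g u (congrArg Subtype.val hrep) j
  rw [hval, D6 _ _ (D9 (g i0))]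
  by_cases hb : b <;> simp [hu, hb]
  · exact D7.2.1
  · exact D7.1

end Fiber
end S3EKR
namespace S3EKR
lemma D15 : ev cc = true ∧ cc ≠ 1 ∧ ev (1 : P3) = true := by decide
lemma D16 : ∀ x y : P3, ev x = true → ev y = false → ev (x⁻¹ * y) = false := by decide

lemma card_sigma_nat {ι : Type*} [Fintype ι] (f : ι → Type*) [∀ i, Fintype (f i)] :
    Nat.card (Σ i, f i) = ∑ i, Nat.card (f i) := by
  simp [Nat.card_eq_fintype_card]
end S3EKR
open S3EKR in
/-- Let `n ≥ 3`. If `H ≤ Sₙ` is transitive, has the strict-EKR-property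
and contains an element fixing exactly one point, then `S₃ ≀ H` has the
strict-EKR-property. -/
theorem S3_wr_H_hasStrictEKR {n : ℕ} (hn : 3 ≤ n) (H : Subgroup (Equiv.Perm (Fin n)))
    (hH : IsTransitive H) (hstrict : HasStrictEKR H)
    (hfix : ∃ h ∈ H, ∃! i : Fin n, h i = i) :
    HasStrictEKR (wreathProd (⊤ : Subgroup (Equiv.Perm (Fin 3))) H) := by
  classical
  set W := wreathProd (⊤ : Subgroup (Equiv.Perm (Fin 3))) H with hWdef
  intro I hIint hImax
  set Ih : Set ((Fin n → P3) × H) := ⇑(Psi H) ⁻¹' I with hIhdef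
  set i₀ : Fin n := ⟨0, by omega⟩ with hi₀def
  set p₀ : Fin 3 := 0 with hp₀def
  set B : ℕ := 2 * 6 ^ (n - 1) with hBdef
  set mH : ℕ := Nat.card (stabSet H i₀) with hmHdef
  -- cardinality transfer
  have hcardI : Nat.card Ih = Nat.card I :=
    Nat.card_congr (Equiv.subtypeEquiv (Psi H) (fun p => Iff.rfl))
  -- downstairs intersecting condition
  have hint2 : ∀ p ∈ Ih, ∀ q ∈ Ih, ∃ i : Fin n,
      (p.2 : Equiv.Perm (Fin n)) i = (q.2 : Equiv.Perm (Fin n)) i ∧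
      (p.1 i = q.1 i ∨ ev (p.1 i) ≠ ev (q.1 i)) := by
    intro p hp q hq
    obtain ⟨⟨v, i⟩, hv⟩ := hIint ((Psi H) p) hp ((Psi H) q) hq
    simp only [Psi_coe, wreathPerm_apply, Prod.mk.injEq] at hv
    exact ⟨i, hv.2, (D1 _ _).1 ⟨v, hv.1⟩⟩
  -- fibers
  set Fib : H → Set (Fin n → P3) := fun h => {g | (g, h) ∈ Ih} with hFibdef
  set S : Set H := {h : H | (Fib h).Nonempty} with hSdef
  have hfibint : ∀ h : H, ∀ g ∈ Fib h, ∀ g' ∈ Fib h,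
      ∃ i, g i = g' i ∨ ev (g i) ≠ ev (g' i) := by
    intro h g hg g' hg'
    obtain ⟨i, -, hi⟩ := hint2 (g, h) hg (g', h) hg'
    exact ⟨i, hi⟩
  -- sum decomposition
  have hsum : Nat.card Ih = ∑ h : H, Nat.card (Fib h) := by
    rw [Nat.card_congr
      (⟨fun x => ⟨x.1.2, ⟨x.1.1, x.2⟩⟩, fun y => ⟨(y.2.1, y.1), y.2.2⟩,
        fun x => rfl, fun y => rfl⟩ : Ih ≃ Σ h : H, Fib h)]
    exact card_sigma_nat _
  -- per fiber bound
  have hRcard : Nat.card (RSet i₀) = B := by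
    rw [hBdef, RSet, card_coord i₀ ({1, twist} : Set P3)]
    congr 1
    rw [Nat.card_coe_set_eq, Set.ncard_pair (Ne.symm D7.2.2)]
  have hfible : ∀ h : H, Nat.card (Fib h) ≤ B := by
    intro h
    rw [← hRcard]
    exact fiber_card_le i₀ (Fib h) (hfibint h)
  -- S is intersecting in H
  have hSint : IsIntersecting H S := by
    intro h hh h' hh'
    obtain ⟨g, hg⟩ := hh
    obtain ⟨g', hg'⟩ := hh'
    obtain ⟨i, hi, -⟩ := hint2 (g, h) hg (g', h') hg'
    exact ⟨i, hi⟩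
  have hSle : Nat.card S ≤ mH := H_max_bound hH hstrict i₀ S hSint
  -- the stabilizer of (p₀, i₀) upstairs
  have hstabWint : IsIntersecting W (stabSet W (p₀, i₀)) :=
    fun g hg h hh => ⟨(p₀, i₀), by rw [hg, hh]⟩
  have hstabWcard : Nat.card (stabSet W (p₀, i₀)) = B * mH := by
    have e1 : Nat.card (({g : Fin n → P3 | g i₀ ∈ {z : P3 | z p₀ = p₀}} ×ˢ stabSet H i₀ :
          Set ((Fin n → P3) × H))) = Nat.card (stabSet W (p₀, i₀)) := by
      refine Nat.card_congr (Equiv.subtypeEquiv (Psi H) (fun p => ?_))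
      have hco : ((Psi H) p : Equiv.Perm (Fin 3 × Fin n)) (p₀, i₀) = (p.1 i₀ p₀, (p.2 : Equiv.Perm (Fin n)) i₀) := rfl
      constructor
      · rintro ⟨h1, h2⟩
        show ((Psi H) p : Equiv.Perm (Fin 3 × Fin n)) (p₀, i₀) = (p₀, i₀)
        rw [hco, Prod.mk.injEq]
        exact ⟨h1, h2⟩
      · intro hmem
        have h2 : ((Psi H) p : Equiv.Perm (Fin 3 × Fin n)) (p₀, i₀) = (p₀, i₀) := hmem
        rw [hco, Prod.mk.injEq] at h2
        exact ⟨h2.1, h2.2⟩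
    have hsp : Nat.card ({z : P3 | z p₀ = p₀} : Set P3) = 2 := D14 p₀
    rw [← e1, card_setProd, card_coord i₀ _, hsp, ← hmHdef, hBdef]
  -- maximality gives the lower bound
  have hlow : B * mH ≤ Nat.card I := by
    rw [← hstabWcard]
    exact hImax _ hstabWint
  -- counting chain
  have hScard : Nat.card S = (Finset.univ.filter (· ∈ S)).card := by
    rw [Nat.card_eq_fintype_card, Fintype.card_subtype]
  have hchain1 : ∑ h : H, Nat.card (Fib h) ≤
      ∑ h : H, (if h ∈ S then B else 0) := by
    refine Finset.sum_le_sum fun h _ => ?_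
    by_cases hh : h ∈ S
    · simpa [hh] using hfible h
    · have : Fib h = ∅ := Set.not_nonempty_iff_eq_empty.1 hh
      simp [hh, this]
  have hchain2 : ∑ h : H, (if h ∈ S then B else 0) = Nat.card S * B := by
    rw [Finset.sum_ite, Finset.sum_const, Finset.sum_const_zero, add_zero,
      hScard, smul_eq_mul]
  have hup : Nat.card I ≤ Nat.card S * B := by
    rw [← hcardI, hsum, ← hchain2]; exact hchain1
  have hup2 : Nat.card S * B ≤ mH * B := Nat.mul_le_mul_right B hSle
  have hBpos : 0 < B := by positivity
  -- all the inequalities are equalities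
  have hSeq : Nat.card S = mH := by
    have h1 : Nat.card S * B ≤ mH * B := hup2
    have h2 : mH * B ≤ Nat.card S * B := by
      calc mH * B = B * mH := Nat.mul_comm _ _
        _ ≤ Nat.card I := hlow
        _ ≤ Nat.card S * B := hup
    exact Nat.eq_of_mul_eq_mul_right hBpos (le_antisymm h1 h2)
  have hsumeq : ∑ h : H, Nat.card (Fib h) = ∑ h : H, (if h ∈ S then B else 0) := by
    refine le_antisymm hchain1 ?_
    rw [hchain2, hSeq]
    calc mH * B = B * mH := Nat.mul_comm _ _
      _ ≤ Nat.card I := hlow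
      _ = ∑ h : H, Nat.card (Fib h) := by rw [← hcardI, hsum]
  have hfibeq : ∀ h ∈ S, Nat.card (Fib h) = B := by
    intro h hh
    have := (Finset.sum_eq_sum_iff_of_le (fun h _ => by
      by_cases hh' : h ∈ S
      · simpa [hh'] using hfible h
      · have : Fib h = ∅ := Set.not_nonempty_iff_eq_empty.1 hh'
        simp [hh', this])).1 hsumeq h (Finset.mem_univ h)
    simpa [hh] using this
  -- S is a maximum intersecting set in H
  have hSmax : ∀ J : Set H, IsIntersecting H J → Nat.card J ≤ Nat.card S := by
    intro J hJ
    rw [hSeq]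
    exact H_max_bound hH hstrict i₀ J hJ
  obtain ⟨j, a, hSco⟩ := hstrict S hSint hSmax
  -- the element of H fixing exactly j
  obtain ⟨h₀, hh₀, istar, histar, histaru⟩ := hfix
  obtain ⟨t, htH, ht⟩ := hH istar j
  set w : Equiv.Perm (Fin n) := t * h₀ * t⁻¹ with hwdef
  have hwH : w ∈ H := H.mul_mem (H.mul_mem htH hh₀) (H.inv_mem htH)
  have htinv : t⁻¹ j = istar := by rw [← ht]; exact t.symm_apply_apply istar
  have hwj : w j = j := by
    show t (h₀ (t⁻¹ j)) = j
    rw [htinv, histar, ht]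
  have hwuniq : ∀ i, w i = i → i = j := by
    intro i hi
    have h1 : t (h₀ (t⁻¹ i)) = i := hi
    have h2 : h₀ (t⁻¹ i) = t⁻¹ i := by
      have h3 := congrArg (⇑t⁻¹) h1
      simpa using h3
    have h3 : t⁻¹ i = istar := histaru _ h2
    have h4 := congrArg (⇑t) h3
    rw [ht] at h4
    simpa using h4
  -- structure of the fibers over S
  have hfibstruct : ∀ hh : H, hh ∈ S → ∃ x y : P3, ev x = true ∧ ev y = false ∧
      Fib hh = {g | g j ∈ ({x, y} : Set P3)} := by
    intro hh hmem
    have hmem' := hmem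
    rw [hSco] at hmem'
    obtain ⟨u', hu'stab, hu'⟩ := hmem'
    have hu'j : (u' : Equiv.Perm (Fin n)) j = j := hu'stab
    have hwu'stab : (⟨w, hwH⟩ : H) * u' ∈ stabSet H j := by
      show (w * (u' : Equiv.Perm (Fin n))) j = j
      rw [Equiv.Perm.mul_apply, hu'j, hwj]
    set hh' : H := a * (⟨w, hwH⟩ * u') with hhh'
    have hh'S : hh' ∈ S := by rw [hSco]; exact ⟨_, hwu'stab, rfl⟩
    have hagree : ∀ i : Fin n, (hh : Equiv.Perm (Fin n)) i = (hh' : Equiv.Perm (Fin n)) i → i = j := by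
      intro i hi
      have e1 : (hh : Equiv.Perm (Fin n)) i = (a : Equiv.Perm (Fin n)) ((u' : Equiv.Perm (Fin n)) i) := by
        rw [← hu']; rfl
      have e2 : (hh' : Equiv.Perm (Fin n)) i = (a : Equiv.Perm (Fin n)) (w ((u' : Equiv.Perm (Fin n)) i)) := rfl
      rw [e1, e2] at hi
      have h2 : (u' : Equiv.Perm (Fin n)) i = w ((u' : Equiv.Perm (Fin n)) i) :=
        (Equiv.injective _) hi
      have h3 : (u' : Equiv.Perm (Fin n)) i = j := hwuniq _ h2.symm
      exact (Equiv.injective (u' : Equiv.Perm (Fin n))) (h3.trans hu'j.symm)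
    have hcard' : Nat.card (RSet i₀) ≤ Nat.card (Fib hh') :=
      le_of_eq (hRcard.trans (hfibeq hh' hh'S).symm)
    obtain ⟨gE', hgE', hevE'⟩ := fiber_parity i₀ (Fib hh') (hfibint hh') hcard' j true
    obtain ⟨gO', hgO', hevO'⟩ := fiber_parity i₀ (Fib hh') (hfibint hh') hcard' j false
    have hkey : ∀ g ∈ Fib hh,
        (ev (g j) = true → g j = gE' j) ∧ (ev (g j) = false → g j = gO' j) := by
      intro g hg
      constructor
      · intro hev
        obtain ⟨i, hiag, halt⟩ := hint2 (g, hh) hg (gE', hh') hgE'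
        have hij : i = j := hagree i hiag
        subst hij
        rcases halt with h | h
        · exact h
        · exact absurd (by rw [hev, hevE']) h
      · intro hev
        obtain ⟨i, hiag, halt⟩ := hint2 (g, hh) hg (gO', hh') hgO'
        have hij : i = j := hagree i hiag
        subst hij
        rcases halt with h | h
        · exact h
        · exact absurd (by rw [hev, hevO']) h
    refine ⟨gE' j, gO' j, hevE', hevO', ?_⟩
    have hne : gE' j ≠ gO' j := by
      intro e
      rw [e, hevO'] at hevE'
      exact Bool.false_ne_true hevE'
    have hsub : Fib hh ⊆ {g | g j ∈ ({gE' j, gO' j} : Set P3)} := by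
      intro g hg
      rcases Bool.eq_false_or_eq_true (ev (g j)) with h | h
      · exact Or.inl ((hkey g hg).1 h)
      · exact Or.inr ((hkey g hg).2 h)
    have hpaircard : Nat.card {g : Fin n → P3 | g j ∈ ({gE' j, gO' j} : Set P3)} = B := by
      rw [card_coord j _, hBdef]
      congr 1
      rw [Nat.card_coe_set_eq, Set.ncard_pair hne]
    refine Set.eq_of_subset_of_ncard_le hsub ?_ (Set.toFinite _)
    rw [← Nat.card_coe_set_eq, ← Nat.card_coe_set_eq, hpaircard, hfibeq hh hmem]
  -- all fibers over S are equal
  have haS : a ∈ S := by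
    rw [hSco]
    refine ⟨1, ?_, mul_one a⟩
    show ((1 : H) : Equiv.Perm (Fin n)) j = j
    simp
  obtain ⟨x₀, y₀, hx₀, hy₀, hFa⟩ := hfibstruct a haS
  have hglob : ∀ hh ∈ S, Fib hh = {g | g j ∈ ({x₀, y₀} : Set P3)} := by
    intro hh hmem
    obtain ⟨x, y, hx, hy, hF⟩ := hfibstruct hh hmem
    have hcross : ∀ z z' : P3, ev z = ev z' → z ∈ ({x, y} : Set P3) →
        z' ∈ ({x₀, y₀} : Set P3) → z = z' := by
      intro z z' hev hz hz'
      set g : Fin n → P3 := fun i => if i = j then z else 1 with hgdef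
      set g' : Fin n → P3 := fun i => if i = j then z' else cc with hg'def
      have hg : g ∈ Fib hh := by
        rw [hF]
        show (if j = j then z else 1) ∈ ({x, y} : Set P3)
        simpa using hz
      have hg' : g' ∈ Fib a := by
        rw [hFa]
        show (if j = j then z' else cc) ∈ ({x₀, y₀} : Set P3)
        simpa using hz'
      obtain ⟨i, hiag, halt⟩ := hint2 (g, hh) hg (g', a) hg'
      by_cases hij : i = j
      · subst hij
        simp only [hgdef, hg'def, if_pos rfl] at halt
        rcases halt with h | h
        · exact h
        · exact absurd (by rw [hev]) h
      · exfalso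
        simp only [hgdef, hg'def, if_neg hij] at halt
        rcases halt with h | h
        · exact D15.2.1 h.symm
        · exact h (by rw [D15.1, D15.2.2])
    have hxx : x = x₀ := hcross x x₀ (by rw [hx, hx₀]) (Or.inl rfl) (Or.inl rfl)
    have hyy : y = y₀ := hcross y y₀ (by rw [hy, hy₀]) (Or.inr rfl) (Or.inr rfl)
    rw [hF, hxx, hyy]
  -- the final coset
  set u : P3 := x₀⁻¹ * y₀ with hudef
  have huev : ev u = false := D16 x₀ y₀ hx₀ hy₀
  obtain ⟨b, hb⟩ := D11 u huev
  have hstab3 : ∀ z : P3, z b = b ↔ z = 1 ∨ z = u := D10 u huev b hb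
  set g0 : Fin n → P3 := fun i => if i = j then x₀ else 1 with hg0def
  have hσ₀mem : wreathPerm g0 (a : Equiv.Perm (Fin n)) ∈ W :=
    ⟨g0, (a : Equiv.Perm (Fin n)), fun _ => trivial, a.2, rfl⟩
  refine ⟨(b, j), ⟨wreathPerm g0 (a : Equiv.Perm (Fin n)), hσ₀mem⟩, ?_⟩
  ext σ
  constructor
  · intro hσ
    set p := (Psi H).symm σ with hpdef
    have hPp : (Psi H) p = σ := (Psi H).apply_symm_apply σ
    have hpI : p ∈ Ih := by
      show (Psi H) p ∈ I
      rw [hPp]; exact hσ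
    have hp2S : p.2 ∈ S := ⟨p.1, hpI⟩
    have hp2S' := hp2S
    rw [hSco] at hp2S'
    obtain ⟨u', hu'stab, hu'⟩ := hp2S'
    have hu'j : (u' : Equiv.Perm (Fin n)) j = j := hu'stab
    have hpj : p.1 j ∈ ({x₀, y₀} : Set P3) := by
      have hEq := hglob p.2 hp2S
      have : p.1 ∈ Fib p.2 := hpI
      rw [hEq] at this
      exact this
    set g' : Fin n → P3 := fun i => if i = j then x₀⁻¹ * p.1 j else p.1 i with hg'def
    have hg'jb : g' j b = b := by
      show (if j = j then x₀⁻¹ * p.1 j else p.1 j) b = b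
      rw [if_pos rfl]
      refine (hstab3 _).2 ?_
      rcases hpj with h | h
      · left; rw [h]; group
      · right; rw [h, hudef]
    have hτstab : (Psi H) (g', u') ∈ stabSet W (b, j) := by
      show ((Psi H) (g', u') : Equiv.Perm (Fin 3 × Fin n)) (b, j) = (b, j)
      show (g' j b, (u' : Equiv.Perm (Fin n)) j) = (b, j)
      rw [hg'jb, hu'j]
    refine ⟨(Psi H) (g', u'), hτstab, ?_⟩
    apply Subtype.ext
    show wreathPerm g0 (a : Equiv.Perm (Fin n)) *
      ((Psi H) (g', u') : Equiv.Perm (Fin 3 × Fin n)) = (σ : Equiv.Perm (Fin 3 × Fin n))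
    rw [Psi_coe]
    have hσco : (σ : Equiv.Perm (Fin 3 × Fin n)) =
        wreathPerm p.1 (p.2 : Equiv.Perm (Fin n)) := by
      rw [← hPp]; rfl
    rw [hσco, wreathPerm_mul]
    have hgpart : (fun i => g0 ((u' : Equiv.Perm (Fin n)) i) * g' i) = p.1 := by
      funext i
      by_cases hij : i = j
      · subst hij
        rw [hu'j]
        show (if i = i then x₀ else 1) * (if i = i then x₀⁻¹ * p.1 i else p.1 i) = p.1 i
        simp
      · have hne : (u' : Equiv.Perm (Fin n)) i ≠ j := by
          intro e
          exact hij ((Equiv.injective (u' : Equiv.Perm (Fin n))) (e.trans hu'j.symm))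
        show (if (u' : Equiv.Perm (Fin n)) i = j then x₀ else 1) *
          (if i = j then x₀⁻¹ * p.1 j else p.1 i) = p.1 i
        rw [if_neg hne, if_neg hij, one_mul]
    have hhpart : (a : Equiv.Perm (Fin n)) * (u' : Equiv.Perm (Fin n)) =
        (p.2 : Equiv.Perm (Fin n)) := by
      rw [← hu']; rfl
    rw [hgpart, hhpart]
  · rintro ⟨τ, hτstab, rfl⟩
    set q := (Psi H).symm τ with hqdef
    have hPq : (Psi H) q = τ := (Psi H).apply_symm_apply τ
    have hτco : (τ : Equiv.Perm (Fin 3 × Fin n)) =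
        wreathPerm q.1 (q.2 : Equiv.Perm (Fin n)) := by rw [← hPq]; rfl
    have hstabq : q.1 j b = b ∧ (q.2 : Equiv.Perm (Fin n)) j = j := by
      have h1 : (τ : Equiv.Perm (Fin 3 × Fin n)) (b, j) = (b, j) := hτstab
      rw [hτco] at h1
      exact ⟨congrArg Prod.fst h1, congrArg Prod.snd h1⟩
    have hq2S : a * q.2 ∈ S := by rw [hSco]; exact ⟨q.2, hstabq.2, rfl⟩
    have hmemIh : ((fun i => g0 ((q.2 : Equiv.Perm (Fin n)) i) * q.1 i), a * q.2) ∈ Ih := by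
      have hfq : (fun i => g0 ((q.2 : Equiv.Perm (Fin n)) i) * q.1 i) ∈ Fib (a * q.2) → _ ∈ Ih := fun h => h
      refine hfq ?_
      rw [hglob _ hq2S]
      show g0 ((q.2 : Equiv.Perm (Fin n)) j) * q.1 j ∈ ({x₀, y₀} : Set P3)
      rw [hstabq.2]
      have hg0j : g0 j = x₀ := if_pos rfl
      rw [hg0j]
      rcases (hstab3 (q.1 j)).1 hstabq.1 with h | h
      · left; rw [h, mul_one]
      · right
        show x₀ * q.1 j = y₀
        rw [h, hudef]
        group
    have hfinal : (⟨wreathPerm g0 (a : Equiv.Perm (Fin n)), hσ₀mem⟩ : W) * τ =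
        (Psi H) ((fun i => g0 ((q.2 : Equiv.Perm (Fin n)) i) * q.1 i), a * q.2) := by
      apply Subtype.ext
      show wreathPerm g0 (a : Equiv.Perm (Fin n)) * (τ : Equiv.Perm (Fin 3 × Fin n)) = _
      rw [hτco, wreathPerm_mul, Psi_coe]
      rfl
    show (⟨wreathPerm g0 (a : Equiv.Perm (Fin n)), hσ₀mem⟩ : W) * τ ∈ I
    rw [hfinal]
    exact hmemIh
end
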